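/- Fix constants κ > 0 and α ∈ ℝ. For b sufficiently large, the equation κ l^α e^l = b has a unique solution l*(b) among l > max(1, |α|), and l*(b) → ∞ as b → ∞. Define the iteration l⁽⁰⁾(b) = log b and l⁽ⁿ⁺¹⁾(b) = l⁽ⁿ⁾(b) − log(κ (l⁽ⁿ⁾(b))^α e^{l⁽ⁿ⁾(b)}) + log b = log b − log κ − α log l⁽ⁿ⁾(b). Then two iterations already achieve accuracy o(1/log b): lim_{b → ∞} (log b) · |l⁽²⁾(b) − l*(b)| = 0. -/

import Mathlib

open Filter Real

lemma abs_log_sub_log_le' {c x y : ℝ} (hc : 0 < c) (hx : c ≤ x) (hy : c ≤ y) :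
    |Real.log x - Real.log y| ≤ |x - y| / c := by
  have key : ∀ a b : ℝ, c ≤ a → c ≤ b → a ≤ b → Real.log b - Real.log a ≤ (b - a) / c := by
    intro a b ha hb hab
    have ha0 : 0 < a := hc.trans_le ha
    have hb0 : 0 < b := hc.trans_le hb
    have h1 : Real.log b - Real.log a = Real.log (b / a) := (Real.log_div hb0.ne' ha0.ne').symm
    have h2 : Real.log (b / a) ≤ b / a - 1 := Real.log_le_sub_one_of_pos (by positivity)
    have h3 : b / a - 1 = (b - a) / a := by field_simp
    have h4 : (b - a) / a ≤ (b - a) / c := by gcongr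
    linarith [h1 ▸ (h3 ▸ h2 : Real.log (b/a) ≤ (b - a)/a)]
  rcases le_total x y with h | h
  · have h0 := key x y hx hy h
    have hm : Real.log x ≤ Real.log y := Real.log_le_log (hc.trans_le hx) h
    rw [abs_sub_comm, abs_of_nonneg (sub_nonneg.2 hm), abs_sub_comm, abs_of_nonneg (sub_nonneg.2 h)]
    exact h0
  · have h0 := key y x hy hx h
    have hm : Real.log y ≤ Real.log x := Real.log_le_log (hc.trans_le hy) h
    rw [abs_of_nonneg (sub_nonneg.2 hm), abs_of_nonneg (sub_nonneg.2 h)]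
    exact h0

noncomputable def fAux (κ α : ℝ) : ℝ → ℝ := fun l => Real.log κ + α * Real.log l + l

lemma fAux_strictMonoOn (κ α : ℝ) : StrictMonoOn (fAux κ α) (Set.Ici (max 1 |α|)) := by
  intro x hx y hy hxy
  simp only [Set.mem_Ici] at hx hy
  have hx1 : (1:ℝ) ≤ x := le_trans (le_max_left _ _) hx
  have hxα : |α| ≤ x := le_trans (le_max_right _ _) hx
  have hx0 : 0 < x := by linarith
  have hlog : Real.log x ≤ Real.log y := Real.log_le_log hx0 hxy.le
  have hstep : |α| * (Real.log y - Real.log x) < y - x := by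
    rcases eq_or_ne α 0 with h0 | h0
    · simp [h0]; linarith
    · have hα0 : 0 < |α| := abs_pos.2 h0
      have hd : Real.log y - Real.log x = Real.log (y / x) := (Real.log_div (by linarith) hx0.ne').symm
      have h2 : Real.log (y / x) < y / x - 1 :=
        Real.log_lt_sub_one_of_pos (div_pos (hx0.trans hxy) hx0) (by
          intro h; rw [div_eq_one_iff_eq hx0.ne'] at h; linarith)
      have h3 : |α| * (y / x - 1) ≤ x * (y / x - 1) := by
        apply mul_le_mul_of_nonneg_right hxα
        have : (1:ℝ) ≤ y / x := (one_le_div hx0).2 hxy.le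
        linarith
      have h4 : x * (y / x - 1) = y - x := by field_simp
      calc |α| * (Real.log y - Real.log x) = |α| * Real.log (y/x) := by rw [hd]
        _ < |α| * (y/x - 1) := by apply mul_lt_mul_of_pos_left h2 hα0
        _ ≤ y - x := by rw [← h4] at *; exact h3
  have hge : α * (Real.log y - Real.log x) ≥ -(|α| * (Real.log y - Real.log x)) := by
    rw [← neg_mul]
    exact mul_le_mul_of_nonneg_right (neg_abs_le α) (by linarith)
  unfold fAux
  nlinarith

lemma fAux_tendsto (κ α : ℝ) : Tendsto (fAux κ α) atTop atTop := by
  have h1 : (fun l : ℝ => α * Real.log l) =o[atTop] (fun l : ℝ => l) :=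
    (Real.isLittleO_log_id_atTop).const_mul_left α
  have h2 : ∀ᶠ l : ℝ in atTop, ‖α * Real.log l‖ ≤ (1/2) * ‖l‖ := h1.bound (by norm_num)
  have h3 : ∀ᶠ l : ℝ in atTop, Real.log κ + (1/2) * l ≤ fAux κ α l := by
    filter_upwards [h2, eventually_ge_atTop (0:ℝ)] with l hl hl0
    have : -((1/2) * l) ≤ α * Real.log l := by
      rw [Real.norm_eq_abs, Real.norm_eq_abs, abs_of_nonneg hl0] at hl
      have := neg_abs_le (α * Real.log l)
      linarith
    unfold fAux; linarith
  apply tendsto_atTop_mono' _ h3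
  apply tendsto_atTop_add_const_left
  exact (tendsto_id.const_mul_atTop (by norm_num : (0:ℝ) < 1/2))

lemma fAux_continuousOn (κ α : ℝ) : ContinuousOn (fAux κ α) (Set.Ici (max 1 |α|)) := by
  apply ContinuousOn.add
  apply ContinuousOn.add continuousOn_const
  · exact (continuousOn_const.mul (Real.continuousOn_log.mono (by
      intro x hx; simp only [Set.mem_Ici] at hx; simp only [Set.mem_compl_iff, Set.mem_singleton_iff]
      have : (1:ℝ) ≤ x := le_trans (le_max_left _ _) hx
      intro h; rw [h] at this; linarith)))
  · exact continuousOn_id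

/-- **Two iterations of Algorithm 2 suffice.**
For `κ > 0` and `α ∈ ℝ`, for `b` large the equation `κ l^α e^l = b` has a
unique solution `l*(b)` among `l > max(1, |α|)`, and `l*(b) → ∞` as
`b → ∞`.  The iteration `l⁽⁰⁾ = log b`,
`l⁽ⁿ⁺¹⁾ = log b − log κ − α log l⁽ⁿ⁾` satisfies
`(log b) · |l⁽²⁾(b) − l*(b)| → 0`, i.e. two iterations already achieve
accuracy `o(1/log b)`. -/
theorem two_newton_iterations_suffice (κ α : ℝ) (hκ : 0 < κ) :
    ∃ b₀ : ℝ, ∃ L : ℝ → ℝ,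
      (∀ b ≥ b₀,
        max 1 |α| < L b ∧
        κ * L b ^ α * Real.exp (L b) = b ∧
        ∀ l : ℝ, max 1 |α| < l → κ * l ^ α * Real.exp l = b → l = L b) ∧
      Tendsto L atTop atTop ∧
      Tendsto (fun b =>
          Real.log b *
            |(Real.log b - Real.log κ -
                α * Real.log (Real.log b - Real.log κ -
                  α * Real.log (Real.log b))) - L b|)
        atTop (nhds 0) := by
  classical
  set m : ℝ := max 1 |α| with hm
  have hm1 : (1:ℝ) ≤ m := le_max_left _ _
  have hmα : |α| ≤ m := le_max_right _ _
  set b₀ : ℝ := Real.exp (fAux κ α (m+1)) with hb₀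
  -- existence of solutions
  have exist : ∀ t : ℝ, fAux κ α (m+1) ≤ t → ∃ l, m < l ∧ fAux κ α l = t := by
    intro t ht
    obtain ⟨M, hMt, hMm⟩ :=
      (((fAux_tendsto κ α).eventually_ge_atTop t).and (eventually_ge_atTop (m+1))).exists
    have hsub : Set.Icc (m+1) M ⊆ Set.Ici m := fun x hx => by
      simp only [Set.mem_Icc] at hx; simp only [Set.mem_Ici]; linarith [hx.1]
    have := intermediate_value_Icc hMm ((fAux_continuousOn κ α).mono hsub)
    obtain ⟨l, hlmem, hleq⟩ := this ⟨ht, hMt⟩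
    simp only [Set.mem_Icc] at hlmem
    exact ⟨l, by linarith [hlmem.1], hleq⟩
  have hex : ∀ b : ℝ, ∃ l : ℝ, b₀ ≤ b → m < l ∧ fAux κ α l = Real.log b := by
    intro b
    by_cases hb : b₀ ≤ b
    · obtain ⟨l, hl⟩ := exist (Real.log b) (by
        have := Real.log_le_log (Real.exp_pos _) hb
        rwa [Real.log_exp] at this)
      exact ⟨l, fun _ => hl⟩
    · exact ⟨0, fun h => absurd h hb⟩
  choose L hL using hex
  -- main properties for b ≥ b₀
  have hmain : ∀ b ≥ b₀, m < L b ∧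
      κ * L b ^ α * Real.exp (L b) = b ∧
      ∀ l : ℝ, m < l → κ * l ^ α * Real.exp l = b → l = L b := by
    intro b hb
    obtain ⟨hLm, hLeq⟩ := hL b hb
    have hb0 : 0 < b := lt_of_lt_of_le (Real.exp_pos _) hb
    have hL0 : 0 < L b := lt_of_lt_of_le one_pos (le_trans hm1 hLm.le)
    have hexp : ∀ l : ℝ, 0 < l → Real.exp (fAux κ α l) = κ * l ^ α * Real.exp l := by
      intro l hl0
      unfold fAux
      rw [Real.exp_add, Real.exp_add, Real.exp_log hκ, mul_comm α (Real.log l),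
        ← Real.rpow_def_of_pos hl0]
    refine ⟨hLm, ?_, ?_⟩
    · rw [← hexp (L b) hL0, hLeq, Real.exp_log hb0]
    · intro l hlm hleq
      have hl0 : 0 < l := lt_of_lt_of_le one_pos (le_trans hm1 hlm.le)
      have hfl : fAux κ α l = Real.log b := by
        apply Real.exp_injective
        rw [hexp l hl0, hleq, Real.exp_log hb0]
      have hfeq : fAux κ α l = fAux κ α (L b) := hfl.trans hLeq.symm
      exact (fAux_strictMonoOn κ α).injOn (Set.mem_Ici.2 hlm.le) (Set.mem_Ici.2 hLm.le) hfeq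
  -- L tends to infinity
  have hLtop : Tendsto L atTop atTop := by
    rw [tendsto_atTop]
    intro N
    filter_upwards [eventually_ge_atTop b₀,
      eventually_ge_atTop (Real.exp (fAux κ α (max N (m+1))))] with b hb1 hb2
    obtain ⟨hLm, hLeq⟩ := hL b hb1
    have h1 : fAux κ α (max N (m+1)) ≤ Real.log b := by
      have := Real.log_le_log (Real.exp_pos _) hb2
      rwa [Real.log_exp] at this
    by_contra hc
    push_neg at hc
    have hlt : L b < max N (m+1) := lt_of_lt_of_le hc (le_max_left _ _)
    have : fAux κ α (L b) < fAux κ α (max N (m+1)) :=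
      (fAux_strictMonoOn κ α) (Set.mem_Ici.2 hLm.le)
        (Set.mem_Ici.2 (by linarith [le_max_right N (m+1)])) hlt
    rw [hLeq] at this
    linarith
  refine ⟨b₀, L, hmain, hLtop, ?_⟩
  -- the quantitative limit
  set c1 : ℝ := 4*(α*α)*(|Real.log κ| + |α| * Real.log 3) with hc1
  set c2 : ℝ := 4*(α*α)*|α| with hc2
  have hgtend : Tendsto (fun b => c1 / Real.log b + c2 * (Real.log (Real.log b) / Real.log b))
      atTop (nhds 0) := by
    have h1 : Tendsto (fun t : ℝ => c1 / t + c2 * (Real.log t / t)) atTop (nhds 0) := by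
      have ha : Tendsto (fun t : ℝ => c1 / t) atTop (nhds 0) :=
        tendsto_const_nhds.div_atTop tendsto_id
      have hb : Tendsto (fun t : ℝ => Real.log t / t) atTop (nhds 0) :=
        (Real.isLittleO_log_id_atTop).tendsto_div_nhds_zero
      have := ha.add (hb.const_mul c2)
      simpa using this
    exact h1.comp Real.tendsto_log_atTop
  refine squeeze_zero' ?_ ?_ hgtend
  · filter_upwards [Real.tendsto_log_atTop.eventually (eventually_ge_atTop (0:ℝ))] with b hb
    exact mul_nonneg hb (abs_nonneg _)
  · -- eventual bound
    have hE1 : ∀ᶠ x : ℝ in atTop, |α| * Real.log x ≤ x/2 := by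
      have h1 : (fun l : ℝ => α * Real.log l) =o[atTop] (fun l : ℝ => l) :=
        (Real.isLittleO_log_id_atTop).const_mul_left α
      filter_upwards [h1.bound (by norm_num : (0:ℝ) < 1/2), eventually_ge_atTop (0:ℝ)] with x hx hx0
      rw [Real.norm_eq_abs, Real.norm_eq_abs, abs_of_nonneg hx0, abs_mul] at hx
      calc |α| * Real.log x ≤ |α| * |Real.log x| := by
            apply mul_le_mul_of_nonneg_left (le_abs_self _) (abs_nonneg _)
        _ ≤ (1/2)*x := hx
        _ = x/2 := by ring
    have hE2 : ∀ᶠ x : ℝ in atTop, |α| * Real.log x ≤ x/4 := by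
      have h1 : (fun l : ℝ => α * Real.log l) =o[atTop] (fun l : ℝ => l) :=
        (Real.isLittleO_log_id_atTop).const_mul_left α
      filter_upwards [h1.bound (by norm_num : (0:ℝ) < 1/4), eventually_ge_atTop (0:ℝ)] with x hx hx0
      rw [Real.norm_eq_abs, Real.norm_eq_abs, abs_of_nonneg hx0, abs_mul] at hx
      calc |α| * Real.log x ≤ |α| * |Real.log x| := by
            apply mul_le_mul_of_nonneg_left (le_abs_self _) (abs_nonneg _)
        _ ≤ (1/4)*x := hx
        _ = x/4 := by ring
    filter_upwards [eventually_ge_atTop b₀, hLtop.eventually hE1,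
      Real.tendsto_log_atTop.eventually hE2,
      Real.tendsto_log_atTop.eventually (eventually_ge_atTop (4*|Real.log κ| + 4))] with b hb hLb hlogb hlogb2
    obtain ⟨hLm, hLeq⟩ := hL b hb
    set t : ℝ := Real.log b with ht
    set ℓ : ℝ := L b with hℓ
    have heq : Real.log κ + α * Real.log ℓ + ℓ = t := hLeq
    have ht4 : (4:ℝ) ≤ t := by linarith [abs_nonneg (Real.log κ)]
    have ht0 : (0:ℝ) < t := by linarith
    have hκt : |Real.log κ| ≤ t/4 := by linarith
    have hℓ1 : (1:ℝ) ≤ ℓ := le_trans hm1 hLm.le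
    have hℓ0 : (0:ℝ) < ℓ := by linarith
    have hlogℓ0 : 0 ≤ Real.log ℓ := Real.log_nonneg hℓ1
    have hlogt0 : 0 ≤ Real.log t := Real.log_nonneg (by linarith)
    have hαlogℓ_lb : -(|α| * Real.log ℓ) ≤ α * Real.log ℓ := by
      rw [← neg_mul]; exact mul_le_mul_of_nonneg_right (neg_abs_le α) hlogℓ0
    have hαlogℓ_ub : α * Real.log ℓ ≤ |α| * Real.log ℓ :=
      mul_le_mul_of_nonneg_right (le_abs_self α) hlogℓ0
    have hαlogt_lb : -(|α| * Real.log t) ≤ α * Real.log t := by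
      rw [← neg_mul]; exact mul_le_mul_of_nonneg_right (neg_abs_le α) hlogt0
    -- bounds on ℓ
    have hℓub : ℓ ≤ 3 * t := by
      linarith [neg_abs_le (Real.log κ), le_abs_self (Real.log κ)]
    have hℓlb : t/2 ≤ ℓ := by
      linarith [neg_abs_le (Real.log κ), le_abs_self (Real.log κ)]
    -- bound on l1
    set l1 : ℝ := t - Real.log κ - α * Real.log t with hl1def
    have hl1lb : t/2 ≤ l1 := by
      have h1 : α * Real.log t ≤ |α| * Real.log t :=
        mul_le_mul_of_nonneg_right (le_abs_self α) hlogt0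
      rw [hl1def]
      linarith [neg_abs_le (Real.log κ), le_abs_self (Real.log κ)]
    -- |t - ℓ| bound
    have hlogℓub : Real.log ℓ ≤ Real.log 3 + Real.log t := by
      calc Real.log ℓ ≤ Real.log (3*t) := Real.log_le_log hℓ0 hℓub
        _ = Real.log 3 + Real.log t := Real.log_mul (by norm_num) ht0.ne'
    have hAbound : |t - ℓ| ≤ |Real.log κ| + |α| * Real.log 3 + |α| * Real.log t := by
      have : t - ℓ = Real.log κ + α * Real.log ℓ := by linarith [heq]
      rw [this]
      calc |Real.log κ + α * Real.log ℓ| ≤ |Real.log κ| + |α * Real.log ℓ| := abs_add_le _ _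
        _ = |Real.log κ| + |α| * |Real.log ℓ| := by rw [abs_mul]
        _ = |Real.log κ| + |α| * Real.log ℓ := by rw [abs_of_nonneg hlogℓ0]
        _ ≤ |Real.log κ| + |α| * (Real.log 3 + Real.log t) := by
            have := mul_le_mul_of_nonneg_left hlogℓub (abs_nonneg α); linarith
        _ = |Real.log κ| + |α| * Real.log 3 + |α| * Real.log t := by ring
    set A : ℝ := |Real.log κ| + |α| * Real.log 3 + |α| * Real.log t with hA
    have hA0 : 0 ≤ A := by
      have h3 : (0:ℝ) ≤ Real.log 3 := Real.log_nonneg (by norm_num)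
      simp only [hA]; positivity
    have ht2pos : (0:ℝ) < t/2 := by linarith
    -- step 1: |ℓ - l1|
    have hstep1 : |ℓ - l1| ≤ |α| * (A / (t/2)) := by
      have hid : ℓ - l1 = α * (Real.log t - Real.log ℓ) := by
        rw [hl1def]; linear_combination heq
      rw [hid, abs_mul]
      have hlt : |Real.log t - Real.log ℓ| ≤ |t - ℓ| / (t/2) :=
        abs_log_sub_log_le' ht2pos (by linarith) hℓlb
      apply mul_le_mul_of_nonneg_left _ (abs_nonneg α)
      refine hlt.trans ?_
      rw [hA]
      gcongr
    -- step 2: |l2 - ℓ|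
    have hstep2 : |(t - Real.log κ - α * Real.log l1) - ℓ| ≤ |α| * ((|α| * (A/(t/2))) / (t/2)) := by
      have hid2 : (t - Real.log κ - α * Real.log l1) - ℓ = α * (Real.log ℓ - Real.log l1) := by
        linear_combination (-1 : ℝ) * heq
      rw [hid2, abs_mul]
      have hbnd : |Real.log ℓ - Real.log l1| ≤ |ℓ - l1| / (t/2) :=
        abs_log_sub_log_le' ht2pos hℓlb hl1lb
      apply mul_le_mul_of_nonneg_left _ (abs_nonneg α)
      refine hbnd.trans ?_
      gcongr
    calc t * |(t - Real.log κ - α * Real.log l1) - ℓ|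
        ≤ t * (|α| * ((|α| * (A/(t/2))) / (t/2))) := by
          apply mul_le_mul_of_nonneg_left hstep2 ht0.le
      _ = c1 / t + c2 * (Real.log t / t) := by
          have habs : |α| * |α| = α * α := abs_mul_abs_self α
          rw [hc1, hc2, hA]
          field_simp
          linear_combination (4 * (|Real.log κ| + |α| * Real.log 3 + |α| * Real.log t)) * habs
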